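/- Let G and H be nontrivial connected graphs and S ⊆ V(G □ H). If there exist g ∈ V(G) and h ∈ V(H) such that both the G-layer V(G)×{h} and the H-layer {g}×V(H) are contained in the cycle convex hull of S, then S is a cycle hull set of G □ H, i.e., the cycle convex hull of S equals V(G □ H). -/

import Mathlib

open SimpleGraph

variable {V α β : Type*}

/-- A set `S` is cycle convex in `G` if no vertex outside `S` lies on a cycle in the
subgraph induced by `S ∪ {w}`. -/
def CycleConvex (G : SimpleGraph V) (S : Set V) : Prop :=
  ∀ w : V, w ∉ S →
    ∀ c : (G.induce (insert w S)).Walk ⟨w, Set.mem_insert w S⟩ ⟨w, Set.mem_insert w S⟩,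
      ¬ c.IsCycle

/-- The cycle convex hull of `S`: the smallest cycle convex set containing `S`. -/
def cycleHull (G : SimpleGraph V) (S : Set V) : Set V :=
  ⋂₀ {T : Set V | S ⊆ T ∧ CycleConvex G T}

/-- The cycle hull number: minimum size of a set whose cycle convex hull is everything. -/
noncomputable def cycleHullNumber (G : SimpleGraph V) : ℕ :=
  sInf {n : ℕ | ∃ S : Set V, S.ncard = n ∧ cycleHull G S = Set.univ}

/-- The cycle convexity number: maximum size of a proper cycle convex set. -/
noncomputable def cycleConvexityNumber (G : SimpleGraph V) : ℕ :=
  sSup {n : ℕ | ∃ S : Set V, S.ncard = n ∧ CycleConvex G S ∧ S ≠ Set.univ}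

/-- The independence number of a graph. -/
noncomputable def indepNumber (G : SimpleGraph V) : ℕ :=
  sSup {n : ℕ | ∃ S : Set V, S.ncard = n ∧ S.Pairwise fun a b => ¬ G.Adj a b}

/-- The strong product of two simple graphs. -/
def strongProd (G : SimpleGraph α) (H : SimpleGraph β) : SimpleGraph (α × β) where
  Adj x y := (G.Adj x.1 y.1 ∧ x.2 = y.2) ∨ (x.1 = y.1 ∧ H.Adj x.2 y.2) ∨
    (G.Adj x.1 y.1 ∧ H.Adj x.2 y.2)
  symm := ⟨fun x y h => by
    rcases h with ⟨h1, h2⟩ | ⟨h1, h2⟩ | ⟨h1, h2⟩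
    · exact Or.inl ⟨h1.symm, h2.symm⟩
    · exact Or.inr (Or.inl ⟨h1.symm, h2.symm⟩)
    · exact Or.inr (Or.inr ⟨h1.symm, h2.symm⟩)⟩
  loopless := ⟨fun x h => by
    rcases h with ⟨h1, _⟩ | ⟨_, h2⟩ | ⟨h1, _⟩
    · exact G.loopless.irrefl _ h1
    · exact H.loopless.irrefl _ h2
    · exact G.loopless.irrefl _ h1⟩

/-- The lexicographic product of two simple graphs. -/
def lexProd (G : SimpleGraph α) (H : SimpleGraph β) : SimpleGraph (α × β) where
  Adj x y := G.Adj x.1 y.1 ∨ (x.1 = y.1 ∧ H.Adj x.2 y.2)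
  symm := ⟨fun x y h => by
    rcases h with h1 | ⟨h1, h2⟩
    · exact Or.inl h1.symm
    · exact Or.inr ⟨h1.symm, h2.symm⟩⟩
  loopless := ⟨fun x h => by
    rcases h with h1 | ⟨_, h2⟩
    · exact G.loopless.irrefl _ h1
    · exact H.loopless.irrefl _ h2⟩


lemma subset_cycleHull' (G : SimpleGraph V) (S : Set V) : S ⊆ cycleHull G S :=
  fun v hv => Set.mem_sInter.2 fun _ hT => hT.1 hv

lemma cycleConvex_cycleHull' (G : SimpleGraph V) (S : Set V) :
    CycleConvex G (cycleHull G S) := by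
  intro w hw c hc
  rw [cycleHull, Set.mem_sInter] at hw
  push_neg at hw
  obtain ⟨T, hT, hwT⟩ := hw
  have hsub : insert w (cycleHull G S) ⊆ insert w T :=
    Set.insert_subset_insert (fun v hv => Set.mem_sInter.1 hv T hT)
  let f : G.induce (insert w (cycleHull G S)) →g G.induce (insert w T) :=
    ⟨fun v => ⟨v.1, hsub v.2⟩, fun {x y} hxy => hxy⟩
  have hf : Function.Injective f := fun x y hxy => by
    have hv : (f x).1 = (f y).1 := congrArg Subtype.val hxy
    exact Subtype.ext hv
  exact hT.2 w hwT (c.map f) (hc.map hf)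

/-- The key 4-cycle step. -/
lemma step_lemma (G : SimpleGraph α) (H : SimpleGraph β) (T : Set (α × β))
    (hconv : CycleConvex (G □ H) T) {a c : α} {b b' : β}
    (hac : G.Adj a c) (hbb : H.Adj b b')
    (h1 : (a, b) ∈ T) (h2 : (c, b) ∈ T) (h3 : (c, b') ∈ T) :
    (a, b') ∈ T := by
  by_contra hw
  set w : α × β := (a, b') with hwdef
  have memw : w ∈ insert w T := Set.mem_insert w T
  have m1 : (a, b) ∈ insert w T := Set.mem_insert_of_mem _ h1
  have m2 : (c, b) ∈ insert w T := Set.mem_insert_of_mem _ h2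
  have m3 : (c, b') ∈ insert w T := Set.mem_insert_of_mem _ h3
  set GH := G □ H
  let v1 : ↥(insert w T) := ⟨(a, b), m1⟩
  let v2 : ↥(insert w T) := ⟨(c, b), m2⟩
  let v3 : ↥(insert w T) := ⟨(c, b'), m3⟩
  have e0 : (GH.induce (insert w T)).Adj ⟨w, memw⟩ v1 := by
    show GH.Adj w (a, b)
    exact SimpleGraph.boxProd_adj.2 (Or.inr ⟨hbb.symm, rfl⟩)
  have e1 : (GH.induce (insert w T)).Adj v1 v2 := by
    show GH.Adj (a, b) (c, b)
    exact SimpleGraph.boxProd_adj.2 (Or.inl ⟨hac, rfl⟩)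
  have e2 : (GH.induce (insert w T)).Adj v2 v3 := by
    show GH.Adj (c, b) (c, b')
    exact SimpleGraph.boxProd_adj.2 (Or.inr ⟨hbb, rfl⟩)
  have e3 : (GH.induce (insert w T)).Adj v3 ⟨w, memw⟩ := by
    show GH.Adj (c, b') w
    exact SimpleGraph.boxProd_adj.2 (Or.inl ⟨hac.symm, rfl⟩)
  let p : (GH.induce (insert w T)).Walk ⟨w, memw⟩ ⟨w, memw⟩ :=
    Walk.cons e0 (Walk.cons e1 (Walk.cons e2 (Walk.cons e3 Walk.nil)))
  have hane : a ≠ c := hac.ne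
  have hbne : b ≠ b' := hbb.ne
  have hp : p.IsCycle := by
    constructor
    · constructor
      · simp [p, Walk.isTrail_def, v1, v2, v3, Subtype.ext_iff, Prod.ext_iff, Sym2.eq_iff,
          hane, hbne, hane.symm, hbne.symm, hwdef, Ne.symm hane, Ne.symm hbne]
      · simp [p]
    · simp [p, v1, v2, v3, Subtype.ext_iff, Prod.ext_iff, hane, hbne, hwdef,
        Ne.symm hane, Ne.symm hbne]
  exact hconv w hw p hp

lemma col_lemma (G : SimpleGraph α) (H : SimpleGraph β) (T : Set (α × β))
    (hconv : CycleConvex (G □ H) T) {b b' : β} (hbb : H.Adj b b')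
    (hrow : ∀ a : α, (a, b) ∈ T) :
    ∀ (a g : α), (G.Walk a g) → (g, b') ∈ T → (a, b') ∈ T := by
  intro a g p
  induction p with
  | nil => exact id
  | cons hadj q ih =>
    intro hg
    exact step_lemma G H T hconv hadj hbb (hrow _) (hrow _) (ih hg)

theorem stmt_6 [Fintype α] [Fintype β] (G : SimpleGraph α) (H : SimpleGraph β)
    [Nontrivial α] [Nontrivial β] (hG : G.Connected) (hH : H.Connected)
    (S : Set (α × β)) (g : α) (h : β)
    (hGlayer : (Set.univ ×ˢ {h} : Set (α × β)) ⊆ cycleHull (G □ H) S)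
    (hHlayer : ({g} ×ˢ Set.univ : Set (α × β)) ⊆ cycleHull (G □ H) S) :
    cycleHull (G □ H) S = Set.univ := by
  set T := cycleHull (G □ H) S with hT
  have hconv : CycleConvex (G □ H) T := cycleConvex_cycleHull' _ _
  have hrowh : ∀ a : α, (a, h) ∈ T := fun a =>
    hGlayer (by simp : (a, h) ∈ (Set.univ ×ˢ {h} : Set (α × β)))
  have hcolg : ∀ b : β, (g, b) ∈ T := fun b =>
    hHlayer (by simp : (g, b) ∈ (({g} : Set α) ×ˢ Set.univ))
  have key : ∀ (b h' : β), (H.Walk b h') → (∀ a : α, (a, h') ∈ T) → ∀ a : α, (a, b) ∈ T := by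
    intro b h' p
    induction p with
    | nil => exact id
    | @cons b b'' _ hadj q ih =>
      intro hlayer a
      exact col_lemma G H T hconv hadj.symm (ih hlayer) a g
        ((hG.preconnected a g).some) (hcolg b)
  ext x
  simp only [Set.mem_univ, iff_true]
  have := key x.2 h ((hH.preconnected x.2 h).some) hrowh x.1
  simpa using this
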